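/- For every m ≥ 1 and every n with 1 ≤ n ≤ m(m+1)/2, there exists a real m×n matrix S such that rank(S̄̄) = n. -/

import Mathlib

open Matrix

/-- The matrix of entrywise products of pairs of rows of `S`:
`(S̄̄)_{(i,j),k} = S i k * S j k`. -/
noncomputable def pairProdMatrix {m n : ℕ} (S : Matrix (Fin m) (Fin n) ℝ) :
    Matrix (Fin m × Fin m) (Fin n) ℝ :=
  Matrix.of fun ij k => S ij.1 k * S ij.2 k

/-- The "square" map sending a vector `v` to the function `(i,j) ↦ v i * v j`. -/
def sqMap {m : ℕ} (v : Fin m → ℝ) : Fin m × Fin m → ℝ := fun p => v p.1 * v p.2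

/-- Indicator family indexed by `Sym2 (Fin m)`. -/
def symInd {m : ℕ} (s : Sym2 (Fin m)) : Fin m × Fin m → ℝ :=
  fun p => if Sym2.mk p.1 p.2 = s then 1 else 0

lemma symInd_linearIndependent (m : ℕ) :
    LinearIndependent ℝ (symInd (m := m)) := by
  rw [Fintype.linearIndependent_iff]
  intro c hc s
  induction s using Sym2.ind with
  | _ a b =>
    have h := congrFun hc (a, b)
    simpa [symInd, Finset.sum_ite_eq, mul_ite] using h

lemma symInd_mem_span (m : ℕ) (s : Sym2 (Fin m)) :
    symInd s ∈ Submodule.span ℝ (Set.range (sqMap (m := m))) := by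
  induction s using Sym2.ind with
  | _ a b =>
    by_cases hab : a = b
    · subst hab
      have : symInd (Sym2.mk a a) = sqMap (Pi.single a 1) := by
        funext p
        obtain ⟨i, j⟩ := p
        by_cases hia : i = a <;> by_cases hja : j = a <;>
          simp_all [symInd, sqMap, Sym2.eq_iff, Pi.single_apply]
      rw [this]
      exact Submodule.subset_span ⟨_, rfl⟩
    · have : symInd (Sym2.mk a b) =
          sqMap (Pi.single a 1 + Pi.single b 1) - sqMap (Pi.single a 1)
            - sqMap (Pi.single b 1) := by
        funext p
        obtain ⟨i, j⟩ := p
        by_cases hia : i = a <;> by_cases hib : i = b <;> by_cases hja : j = a <;>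
          by_cases hjb : j = b <;>
          simp_all [symInd, sqMap, Sym2.eq_iff, Pi.single_apply]
      rw [this]
      exact sub_mem (sub_mem (Submodule.subset_span ⟨_, rfl⟩)
        (Submodule.subset_span ⟨_, rfl⟩)) (Submodule.subset_span ⟨_, rfl⟩)

/-- **Corollary 1, first part.** For every `m ≥ 1` and every
`n` with `1 ≤ n ≤ m(m+1)/2` there is a real `m × n` matrix `S` whose matrix
`S̄̄` of entrywise products of pairs of rows has rank `n`. -/
theorem stmt10 (m n : ℕ) (hm : 1 ≤ m) (hn1 : 1 ≤ n)
    (hn : n ≤ m * (m + 1) / 2) :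
    ∃ S : Matrix (Fin m) (Fin n) ℝ, (pairProdMatrix S).rank = n := by
  classical
  set W : Submodule ℝ (Fin m × Fin m → ℝ) :=
    Submodule.span ℝ (Set.range (sqMap (m := m))) with hW
  -- The symmetric indicators give a lower bound on the dimension of `W`.
  have hWdim : m * (m + 1) / 2 ≤ Module.finrank ℝ W := by
    have hind : LinearIndependent ℝ
        (fun s : Sym2 (Fin m) => (⟨symInd s, symInd_mem_span m s⟩ : W)) := by
      apply LinearIndependent.of_comp W.subtype
      exact symInd_linearIndependent m
    have hcard := hind.fintype_card_le_finrank
    have : Fintype.card (Sym2 (Fin m)) = m * (m + 1) / 2 := by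
      rw [Sym2.card, Fintype.card_fin, Nat.choose_two_right]
      simp [Nat.mul_comm]
    omega
  obtain ⟨b, hb₁, hb₂, hb₃⟩ := exists_linearIndependent ℝ (Set.range (sqMap (m := m)))
  have hbfin : b.Finite := hb₃.setFinite
  haveI : Fintype b := hbfin.fintype
  have hbcard : Module.finrank ℝ W = Fintype.card b := by
    rw [hW, ← hb₂, finrank_span_set_eq_card hb₃]
    exact (Set.toFinset_card b).symm.trans rfl |>.symm ▸ rfl
  have hnb : n ≤ Fintype.card b := by omega
  obtain ⟨e⟩ : Nonempty (Fin n ↪ b) := by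
    apply Function.Embedding.nonempty_of_card_le
    simpa using hnb
  have hv : ∀ k : Fin n, ∃ v : Fin m → ℝ, sqMap v = (e k : Fin m × Fin m → ℝ) :=
    fun k => hb₁ (e k).2
  choose v hvs using hv
  refine ⟨Matrix.of fun i k => v k i, ?_⟩
  have hT : (pairProdMatrix (Matrix.of fun i k => v k i))ᵀ =
      fun k => (e k : Fin m × Fin m → ℝ) := by
    funext k p
    have := congrFun (hvs k) p
    simpa [pairProdMatrix, transpose, sqMap] using this
  have hind : LinearIndependent ℝ (pairProdMatrix (Matrix.of fun i k => v k i))ᵀ := by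
    rw [hT]
    exact hb₃.comp e e.injective
  rw [← Matrix.rank_transpose]
  exact hind.rank_matrix.trans (Fintype.card_fin n)
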